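/- arXiv:1801.02199 — 5 statements merged into one kernel-verified Lean document; each statement's English description precedes it below -/
import Mathlib

section
/- Let a : [n] × [n] → ℝ be symmetric, satisfying the anti-tree-metric property a(i,j) + a(k,l) ≥ min(a(i,k)+a(j,l), a(i,l)+a(j,k)) for all distinct i,j,k,l, and suppose that for every i ∈ [n] one has min_{j≠i} a(i,j) = α*, where α* is the global minimum of a over distinct pairs. Then a satisfies the anti-ultrametric property a(i,j) ≥ min(a(i,k), a(j,k)) for all distinct i,j,k. -/
/-- a real symmetric anti-tree metric `a` such that every row
attains the global minimum `α*` is an anti-ultrametric. -/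
theorem stmt4 (n : ℕ) (hn : 3 ≤ n) (a : Fin n → Fin n → ℝ)
    (hsym : ∀ i j, a i j = a j i)
    (htree : ∀ i j k l : Fin n, i ≠ j → i ≠ k → i ≠ l → j ≠ k → j ≠ l → k ≠ l →
      a i j + a k l ≥ min (a i k + a j l) (a i l + a j k))
    (αstar : ℝ) (hα : IsLeast {v : ℝ | ∃ i j : Fin n, i ≠ j ∧ v = a i j} αstar)
    (hrow : ∀ i : Fin n, IsLeast {v : ℝ | ∃ j : Fin n, j ≠ i ∧ v = a i j} αstar) :
    ∀ i j k : Fin n, i ≠ j → j ≠ k → i ≠ k →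
      a i j ≥ min (a i k) (a j k) := by
  intro i j k hij hjk hik
  have hlow : ∀ p q : Fin n, p ≠ q → αstar ≤ a p q := fun p q h => hα.2 ⟨p, q, h, rfl⟩
  obtain ⟨l, hlk, hval⟩ := (hrow k).1
  by_cases hli : l = i
  · subst hli
    have : a l k = αstar := by rw [hsym]; exact hval.symm
    calc min (a l k) (a j k) ≤ a l k := min_le_left _ _
      _ = αstar := this
      _ ≤ a l j := hlow l j hij
  · by_cases hlj : l = j
    · subst hlj
      have : a l k = αstar := by rw [hsym]; exact hval.symm
      calc min (a i k) (a l k) ≤ a l k := min_le_right _ _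
        _ = αstar := this
        _ ≤ a i l := hlow i l hij
    · -- all four distinct
      have h4 := htree i j k l hij hik (Ne.symm hli) hjk (Ne.symm hlj) (Ne.symm hlk)
      have hkl : a k l = αstar := hval.symm
      have h1 : a i k + a j l ≥ a i k + αstar :=
        add_le_add (le_refl _) (hlow j l fun h => hlj h.symm)
      have h2 : a i l + a j k ≥ a j k + αstar := by
        rw [add_comm (a j k)]
        exact add_le_add_left (hlow i l fun h => hli h.symm) _
      have : a i j + αstar ≥ min (a i k) (a j k) + αstar := by
        rw [hkl] at h4
        calc min (a i k) (a j k) + αstar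
            = min (a i k + αstar) (a j k + αstar) := (min_add_add_right _ _ _).symm
          _ ≤ min (a i k + a j l) (a i l + a j k) := le_min
              ((min_le_left _ _).trans h1) ((min_le_right _ _).trans h2)
          _ ≤ a i j + αstar := h4
      linarith
end

section
/- Let L be a laminar family of subsets of [n] and c : L → ℝ_{>0} a positive weight, and define a(i,j) := ∑ { c(L) : L ∈ L, i ∈ L, j ∈ L } for distinct i,j ∈ [n]. Then a satisfies the anti-ultrametric property: a(i,j) ≥ min(a(i,k), a(j,k)) for all distinct i,j,k ∈ [n]. -/
/-- the quadratic coefficients induced by a positively weighted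
laminar family satisfy the anti-ultrametric property. -/
theorem stmt5 (n : ℕ) (𝓛 : Finset (Finset (Fin n)))
    (hlam : ∀ X ∈ 𝓛, ∀ Y ∈ 𝓛, X ⊆ Y ∨ Y ⊆ X ∨ X ∩ Y = ∅)
    (c : Finset (Fin n) → ℝ) (hc : ∀ L ∈ 𝓛, 0 < c L) :
    ∀ i j k : Fin n, i ≠ j → j ≠ k → i ≠ k →
      (∑ L ∈ 𝓛.filter (fun L => i ∈ L ∧ j ∈ L), c L)
        ≥ min (∑ L ∈ 𝓛.filter (fun L => i ∈ L ∧ k ∈ L), c L)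
              (∑ L ∈ 𝓛.filter (fun L => j ∈ L ∧ k ∈ L), c L) := by
  intro i j k hij hjk hik
  by_cases h : ∀ L ∈ 𝓛, i ∈ L → k ∈ L → j ∈ L
  · refine le_trans (min_le_left _ _) ?_
    apply Finset.sum_le_sum_of_subset_of_nonneg
    · intro L hL
      simp only [Finset.mem_filter] at hL ⊢
      exact ⟨hL.1, hL.2.1, h L hL.1 hL.2.1 hL.2.2⟩
    · intro L hL _
      exact (hc L (Finset.mem_filter.mp hL).1).le
  · push_neg at h
    obtain ⟨L1, hL1, hiL1, hkL1, hjL1⟩ := h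
    refine le_trans (min_le_right _ _) ?_
    apply Finset.sum_le_sum_of_subset_of_nonneg
    · intro L hL
      simp only [Finset.mem_filter] at hL ⊢
      refine ⟨hL.1, ?_, hL.2.1⟩
      rcases hlam L hL.1 L1 hL1 with hs | hs | hs
      · exact absurd (hs hL.2.1) hjL1
      · exact hs hiL1
      · have : k ∈ L ∩ L1 := Finset.mem_inter.mpr ⟨hL.2.2, hkL1⟩
        simp [hs] at this
    · intro L hL _
      exact (hc L (Finset.mem_filter.mp hL).1).le
end

section
/- Let a : [n] × [n] → ℝ be a symmetric function satisfying the anti-ultrametric property a(i,j) ≥ min(a(i,k), a(j,k)) for all distinct i,j,k, and let α* := min_{i≠j} a(i,j). Then there exist a laminar family L of proper subsets of [n] and a positive weight c : L → ℝ_{>0} such that a(i,j) = ∑{ c(L) : L ∈ L, i,j ∈ L } + α* for all distinct i,j ∈ [n]. -/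
open Finset

/-- Key induction lemma: induction on the number of distinct off-diagonal values. -/
lemma stmt6_key (n : ℕ) (hn : 2 ≤ n) :
    ∀ k : ℕ, ∀ a : Fin n → Fin n → ℝ,
    (((Finset.univ ×ˢ Finset.univ).filter (fun p : Fin n × Fin n => p.1 ≠ p.2)).image
        (fun p => a p.1 p.2)).card ≤ k →
    (∀ i j, a i j = a j i) →
    (∀ i j k : Fin n, i ≠ j → j ≠ k → i ≠ k → a i j ≥ min (a i k) (a j k)) →
    ∀ αstar : ℝ, IsLeast {v : ℝ | ∃ i j : Fin n, i ≠ j ∧ v = a i j} αstar →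
    ∃ (𝓛 : Finset (Finset (Fin n))) (c : Finset (Fin n) → ℝ),
      (∀ X ∈ 𝓛, ∀ Y ∈ 𝓛, X ⊆ Y ∨ Y ⊆ X ∨ X ∩ Y = ∅) ∧
      (∀ L ∈ 𝓛, L ≠ Finset.univ) ∧
      (∀ L ∈ 𝓛, 0 < c L) ∧
      (∀ i j : Fin n, i ≠ j →
        a i j = (∑ L ∈ 𝓛.filter (fun L => i ∈ L ∧ j ∈ L), c L) + αstar) ∧
      (∀ L ∈ 𝓛, ∀ i ∈ L, ∀ j ∈ L, ∀ k, k ∉ L → i ≠ j → a i j > a i k) := by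
  intro k
  induction k with
  | zero =>
      intro a hcard hsym hultra αstar hα
      exfalso
      obtain ⟨p, q, hpq, hv⟩ := hα.1
      have hmem : a p q ∈ ((Finset.univ ×ˢ Finset.univ).filter
          (fun p : Fin n × Fin n => p.1 ≠ p.2)).image (fun p => a p.1 p.2) :=
        Finset.mem_image.2 ⟨(p, q), by simp [hpq], rfl⟩
      have := Finset.card_pos.2 ⟨_, hmem⟩
      omega
  | succ k ih =>
      intro a hcard hsym hultra αstar hα
      classical
      set S : Finset (Fin n × Fin n) :=
        (Finset.univ ×ˢ Finset.univ).filter (fun p : Fin n × Fin n => p.1 ≠ p.2) with hS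
      set Vals : Finset ℝ := S.image (fun p => a p.1 p.2) with hVals
      have hmemVals : ∀ i j : Fin n, i ≠ j → a i j ∈ Vals := by
        intro i j hij
        exact Finset.mem_image.2 ⟨(i, j), by simp [hS, hij], rfl⟩
      obtain ⟨p0, q0, hp0q0, hv0⟩ := hα.1
      have hValsne : Vals.Nonempty := ⟨a p0 q0, hmemVals _ _ hp0q0⟩
      obtain ⟨M, hMVals, hmax⟩ : ∃ M, M ∈ Vals ∧ ∀ v ∈ Vals, v ≤ M :=
        ⟨Vals.max' hValsne, Vals.max'_mem _, fun v hv => Finset.le_max' _ _ hv⟩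
      have haleM : ∀ i j : Fin n, i ≠ j → a i j ≤ M :=
        fun i j hij => hmax _ (hmemVals i j hij)
      have hαlb : ∀ i j : Fin n, i ≠ j → αstar ≤ a i j :=
        fun i j hij => hα.2 ⟨i, j, hij, rfl⟩
      by_cases hconst : ∀ i j : Fin n, i ≠ j → a i j = αstar
      · -- constant case
        refine ⟨∅, fun _ => 0, ?_, ?_, ?_, ?_, ?_⟩
        · intro X hX; simp at hX
        · intro L hL; simp at hL
        · intro L hL; simp at hL
        · intro i j hij; simp [hconst i j hij]
        · intro L hL; simp at hL
      · -- non-constant: peel off the top level M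
        push_neg at hconst
        obtain ⟨i0, j0, hi0j0, hne0⟩ := hconst
        have hαltM : αstar < M :=
          lt_of_lt_of_le (lt_of_le_of_ne (hαlb i0 j0 hi0j0) (Ne.symm hne0))
            (haleM i0 j0 hi0j0)
        have hαVals : αstar ∈ Vals := hv0 ▸ hmemVals p0 q0 hp0q0
        -- second largest value M'
        obtain ⟨M', hM'Vals, hM'ltM, hleM'⟩ :
            ∃ M', M' ∈ Vals ∧ M' < M ∧ ∀ v ∈ Vals, v < M → v ≤ M' := by
          have hsmallne : (Vals.filter (fun v => v < M)).Nonempty :=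
            ⟨αstar, Finset.mem_filter.2 ⟨hαVals, hαltM⟩⟩
          refine ⟨(Vals.filter (fun v => v < M)).max' hsmallne, ?_, ?_, ?_⟩
          · exact (Finset.mem_filter.1 ((Vals.filter (fun v => v < M)).max'_mem hsmallne)).1
          · exact (Finset.mem_filter.1 ((Vals.filter (fun v => v < M)).max'_mem hsmallne)).2
          · intro v hv hvM
            exact Finset.le_max' (Vals.filter (fun w => w < M)) v
              (Finset.mem_filter.2 ⟨hv, hvM⟩)
        have hαleM' : αstar ≤ M' := hleM' _ hαVals hαltM
        -- the truncated function
        set a' : Fin n → Fin n → ℝ := fun i j => min (a i j) M' with ha'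
        have ha'le : ∀ i j, a' i j ≤ M' := fun i j => min_le_right _ _
        have ha'lea : ∀ i j, a' i j ≤ a i j := fun i j => min_le_left _ _
        have ha'eq : ∀ i j : Fin n, i ≠ j → a i j < M → a' i j = a i j := by
          intro i j hij hlt
          exact min_eq_left (hleM' _ (hmemVals i j hij) hlt)
        have ha'eqM : ∀ i j : Fin n, i ≠ j → a i j = M → a' i j = M' := by
          intro i j hij hMij
          exact min_eq_right (by rw [hMij]; exact hM'ltM.le)
        -- card bound for a'
        have hcard' : (((Finset.univ ×ˢ Finset.univ).filter
            (fun p : Fin n × Fin n => p.1 ≠ p.2)).image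
            (fun p => a' p.1 p.2)).card ≤ k := by
          have hsub : S.image (fun p => a' p.1 p.2) ⊆ Vals.erase M := by
            intro v hv
            obtain ⟨⟨i, j⟩, hijS, rfl⟩ := Finset.mem_image.1 hv
            have hij : i ≠ j := by
              have := Finset.mem_filter.1 (hS ▸ hijS)
              exact this.2
            rcases lt_or_eq_of_le (haleM i j hij) with hlt | heq
            · rw [ha'eq i j hij hlt]
              exact Finset.mem_erase.2 ⟨ne_of_lt hlt, hmemVals i j hij⟩
            · rw [ha'eqM i j hij heq]
              exact Finset.mem_erase.2 ⟨ne_of_lt hM'ltM, hM'Vals⟩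
          calc (S.image (fun p => a' p.1 p.2)).card
              ≤ (Vals.erase M).card := Finset.card_le_card hsub
            _ = Vals.card - 1 := Finset.card_erase_of_mem hMVals
            _ ≤ k := by omega
        -- symmetry and anti-ultrametric for a'
        have hsym' : ∀ i j, a' i j = a' j i := by
          intro i j
          show min (a i j) M' = min (a j i) M'
          rw [hsym i j]
        have hultra' : ∀ i j k : Fin n, i ≠ j → j ≠ k → i ≠ k →
            a' i j ≥ min (a' i k) (a' j k) := by
          intro i j l hij hjl hil
          have h1 : min (a' i l) (a' j l) ≤ min (a i l) (a j l) :=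
            min_le_min (min_le_left _ _) (min_le_left _ _)
          have h2 : min (a' i l) (a' j l) ≤ M' := le_trans (min_le_left _ _) (ha'le i l)
          exact le_min (le_trans h1 (hultra i j l hij hjl hil)) h2
        -- αstar is still the least value of a'
        have hα' : IsLeast {v : ℝ | ∃ i j : Fin n, i ≠ j ∧ v = a' i j} αstar := by
          constructor
          · refine ⟨p0, q0, hp0q0, ?_⟩
            show αstar = min (a p0 q0) M'
            rw [← hv0]
            exact (min_eq_left hαleM').symm
          · rintro v ⟨i, j, hij, rfl⟩
            exact le_min (hαlb i j hij) hαleM'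
        obtain ⟨𝓛', c', hlam', hproper', hpos', hrepr', hclus'⟩ :=
          ih a' hcard' hsym' hultra' αstar hα'
        -- top-level classes
        set C : Fin n → Finset (Fin n) :=
          fun i => Finset.univ.filter (fun j => j = i ∨ a i j = M) with hC
        have hmemC : ∀ i j : Fin n, j ∈ C i ↔ (j = i ∨ a i j = M) := by
          intro i j; simp [hC]
        have hselfC : ∀ i, i ∈ C i := fun i => (hmemC i i).2 (Or.inl rfl)
        have hCval : ∀ i j : Fin n, j ∈ C i → j ≠ i → a i j = M := by
          intro i j hj hji
          rcases (hmemC i j).1 hj with h | h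
          · exact absurd h hji
          · exact h
        -- if a i j = M then C i = C j
        have hCeq : ∀ i j : Fin n, i ≠ j → a i j = M → C i = C j := by
          have key : ∀ i j : Fin n, i ≠ j → a i j = M → C i ⊆ C j := by
            intro i j hij hMij l hl
            by_cases hli : l = i
            · subst hli
              exact (hmemC j l).2 (Or.inr (by rw [hsym]; exact hMij))
            · have hMil : a i l = M := hCval i l hl hli
              by_cases hlj : l = j
              · exact hlj ▸ hselfC j
              · have h1 : a j l ≥ min (a j i) (a l i) :=
                  hultra j l i (fun h => hlj h.symm) hli (Ne.symm hij)
                have h2 : a j i = M := by rw [hsym]; exact hMij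
                have h3 : a l i = M := by rw [hsym]; exact hMil
                have h4 : a j l = M :=
                  le_antisymm (haleM j l (fun h => hlj h.symm))
                    (by rw [h2, h3, min_self] at h1; exact h1)
                exact (hmemC j l).2 (Or.inr h4)
          intro i j hij hMij
          exact Finset.Subset.antisymm (key i j hij hMij)
            (key j i (Ne.symm hij) (by rw [hsym]; exact hMij))
        have hCmem_eq : ∀ i x : Fin n, x ∈ C i → C x = C i := by
          intro i x hx
          by_cases hxi : x = i
          · rw [hxi]
          · exact (hCeq i x (fun h => hxi h.symm) (hCval i x hx hxi)).symm
        -- pairwise values inside a class equal M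
        have hCpair : ∀ i x y : Fin n, x ∈ C i → y ∈ C i → x ≠ y → a x y = M := by
          intro i x y hx hy hxy
          have hyCx : y ∈ C x := by rw [hCmem_eq i x hx]; exact hy
          exact hCval x y hyCx (Ne.symm hxy)
        -- outgoing values are < M
        have hCout : ∀ i x l : Fin n, x ∈ C i → l ∉ C i → a x l < M := by
          intro i x l hx hl
          have hxl : x ≠ l := fun h => hl (h ▸ hx)
          rcases lt_or_eq_of_le (haleM x l hxl) with h | h
          · exact h
          · exfalso
            have h1 : C l = C x := (hCeq x l hxl h).symm
            have h2 : l ∈ C x := by rw [← h1]; exact hselfC l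
            rw [hCmem_eq i x hx] at h2
            exact hl h2
        -- the family of big classes
        set 𝓒 : Finset (Finset (Fin n)) :=
          (Finset.univ.image C).filter (fun s => 1 < s.card) with h𝓒
        have hmem𝓒 : ∀ X ∈ 𝓒, ∃ i, X = C i ∧ 1 < X.card := by
          intro X hX
          obtain ⟨hX1, hX2⟩ := Finset.mem_filter.1 hX
          obtain ⟨i, _, rfl⟩ := Finset.mem_image.1 hX1
          exact ⟨i, rfl, hX2⟩
        -- classes are proper subsets
        have hCproper : ∀ X ∈ 𝓒, X ≠ Finset.univ := by
          intro X hX hXuniv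
          obtain ⟨i, rfl, _⟩ := hmem𝓒 X hX
          have hp : p0 ∈ C i := by rw [hXuniv]; exact Finset.mem_univ _
          have hq : q0 ∈ C i := by rw [hXuniv]; exact Finset.mem_univ _
          have hM0 := hCpair i p0 q0 hp hq hp0q0
          rw [← hv0] at hM0
          exact absurd hM0 (ne_of_lt hαltM)
        -- cluster property for classes
        have hCclus : ∀ X ∈ 𝓒, ∀ x ∈ X, ∀ y ∈ X, ∀ l, l ∉ X → x ≠ y → a x y > a x l := by
          intro X hX x hx y hy l hl hxy
          obtain ⟨i, rfl, _⟩ := hmem𝓒 X hX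
          rw [hCpair i x y hx hy hxy]
          exact hCout i x l hx hl
        -- distinct classes are disjoint
        have hCdisj : ∀ X ∈ 𝓒, ∀ Y ∈ 𝓒, (X ∩ Y).Nonempty → X = Y := by
          intro X hX Y hY hne
          obtain ⟨z, hz⟩ := hne
          obtain ⟨i, rfl, _⟩ := hmem𝓒 X hX
          obtain ⟨j, rfl, _⟩ := hmem𝓒 Y hY
          have h1 := hCmem_eq i z (Finset.mem_inter.1 hz).1
          have h2 := hCmem_eq j z (Finset.mem_inter.1 hz).2
          rw [← h1, ← h2]
        -- the combined family and weights
        refine ⟨𝓛' ∪ 𝓒,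
          fun L => (if L ∈ 𝓛' then c' L else 0) + (if L ∈ 𝓒 then M - M' else 0),
          ?_, ?_, ?_, ?_, ?_⟩
        · -- laminarity
          have cross : ∀ X ∈ 𝓒, ∀ L ∈ 𝓛', X ⊆ L ∨ L ⊆ X ∨ X ∩ L = ∅ := by
            intro X hX L hL
            by_cases hint : (X ∩ L).Nonempty
            swap
            · exact Or.inr (Or.inr (Finset.not_nonempty_iff_eq_empty.1 hint))
            obtain ⟨z, hz⟩ := hint
            have hzX := (Finset.mem_inter.1 hz).1
            have hzL := (Finset.mem_inter.1 hz).2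
            by_cases hXL : X ⊆ L
            · exact Or.inl hXL
            by_cases hLX : L ⊆ X
            · exact Or.inr (Or.inl hLX)
            exfalso
            obtain ⟨y, hyX, hyL⟩ := Finset.not_subset.1 hXL
            obtain ⟨w, hwL, hwX⟩ := Finset.not_subset.1 hLX
            have hzy : z ≠ y := by rintro rfl; exact hyL hzL
            have hzw : z ≠ w := by rintro rfl; exact hwX hzX
            obtain ⟨i, rfl, _⟩ := hmem𝓒 X hX
            have h1 : a z y = M := hCpair i z y hzX hyX hzy
            have h2 : a z w < M := hCout i z w hzX hwX
            have h3 : a' z w > a' z y := hclus' L hL z hzL w hwL y hyL hzw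
            have h4 : a' z y = M' := ha'eqM z y hzy h1
            have h5 : a' z w = a z w := ha'eq z w hzw h2
            have h6 : a z w ≤ M' := hleM' _ (hmemVals z w hzw) h2
            rw [h4, h5] at h3
            exact absurd h3 (not_lt.2 h6)
          intro X hX Y hY
          rcases Finset.mem_union.1 hX with hX' | hX' <;>
            rcases Finset.mem_union.1 hY with hY' | hY'
          · exact hlam' X hX' Y hY'
          · rcases cross Y hY' X hX' with h | h | h
            · exact Or.inr (Or.inl h)
            · exact Or.inl h
            · exact Or.inr (Or.inr (by rw [Finset.inter_comm]; exact h))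
          · exact cross X hX' Y hY'
          · by_cases hint : (X ∩ Y).Nonempty
            · exact Or.inl (le_of_eq (hCdisj X hX' Y hY' hint))
            · exact Or.inr (Or.inr (Finset.not_nonempty_iff_eq_empty.1 hint))
        · -- properness
          intro L hL
          rcases Finset.mem_union.1 hL with h | h
          · exact hproper' L h
          · exact hCproper L h
        · -- positivity
          intro L hL
          show 0 < (if L ∈ 𝓛' then c' L else 0) + (if L ∈ 𝓒 then M - M' else 0)
          have h1 : (0:ℝ) ≤ if L ∈ 𝓛' then c' L else 0 := by
            split
            · exact (hpos' L ‹_›).le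
            · exact le_rfl
          have h2 : (0:ℝ) ≤ if L ∈ 𝓒 then M - M' else 0 := by
            split
            · linarith
            · exact le_rfl
          rcases Finset.mem_union.1 hL with h | h
          · have h3 : 0 < if L ∈ 𝓛' then c' L else 0 := by
              rw [if_pos h]; exact hpos' L h
            linarith
          · have h3 : 0 < if L ∈ 𝓒 then M - M' else 0 := by
              rw [if_pos h]; exact sub_pos.2 hM'ltM
            linarith
        · -- the representation formula
          intro i j hij
          have hrepr'ij := hrepr' i j hij
          have e1 : (∑ L ∈ 𝓛'.filter (fun L => i ∈ L ∧ j ∈ L),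
                (if L ∈ 𝓛' then c' L else 0))
              = ∑ L ∈ (𝓛' ∪ 𝓒).filter (fun L => i ∈ L ∧ j ∈ L),
                (if L ∈ 𝓛' then c' L else 0) := by
            apply Finset.sum_subset
              (Finset.filter_subset_filter _ Finset.subset_union_left)
            intro L hL hL'
            have hnot : L ∉ 𝓛' := fun hmem =>
              hL' (Finset.mem_filter.2 ⟨hmem, (Finset.mem_filter.1 hL).2⟩)
            rw [if_neg hnot]
          have e1' : (∑ L ∈ 𝓛'.filter (fun L => i ∈ L ∧ j ∈ L),
                (if L ∈ 𝓛' then c' L else 0))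
              = ∑ L ∈ 𝓛'.filter (fun L => i ∈ L ∧ j ∈ L), c' L :=
            Finset.sum_congr rfl (fun L hL => if_pos (Finset.mem_filter.1 hL).1)
          have e2 : (∑ L ∈ 𝓒.filter (fun L => i ∈ L ∧ j ∈ L),
                (if L ∈ 𝓒 then M - M' else 0))
              = ∑ L ∈ (𝓛' ∪ 𝓒).filter (fun L => i ∈ L ∧ j ∈ L),
                (if L ∈ 𝓒 then M - M' else 0) := by
            apply Finset.sum_subset
              (Finset.filter_subset_filter _ Finset.subset_union_right)
            intro L hL hL'
            have hnot : L ∉ 𝓒 := fun hmem =>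
              hL' (Finset.mem_filter.2 ⟨hmem, (Finset.mem_filter.1 hL).2⟩)
            rw [if_neg hnot]
          have e2' : (∑ L ∈ 𝓒.filter (fun L => i ∈ L ∧ j ∈ L),
                (if L ∈ 𝓒 then M - M' else 0))
              = ∑ L ∈ 𝓒.filter (fun L => i ∈ L ∧ j ∈ L), (M - M') :=
            Finset.sum_congr rfl (fun L hL => if_pos (Finset.mem_filter.1 hL).1)
          rw [Finset.sum_add_distrib, ← e1, ← e2, e1', e2']
          rcases lt_or_eq_of_le (haleM i j hij) with hlt | heqM
          · -- a i j < M : no class contains both i and j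
            have hempty : 𝓒.filter (fun L => i ∈ L ∧ j ∈ L) = ∅ := by
              apply Finset.filter_eq_empty_iff.2
              intro X hX hPX
              obtain ⟨hiX, hjX⟩ := hPX
              obtain ⟨l, rfl, _⟩ := hmem𝓒 X hX
              exact absurd (hCpair l i j hiX hjX hij) (ne_of_lt hlt)
            rw [hempty, Finset.sum_empty, add_zero]
            rw [← ha'eq i j hij hlt]
            exact hrepr'ij
          · -- a i j = M : exactly the class C i contains both
            have hCi𝓒 : C i ∈ 𝓒 := by
              apply Finset.mem_filter.2
              refine ⟨Finset.mem_image.2 ⟨i, Finset.mem_univ i, rfl⟩, ?_⟩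
              exact Finset.one_lt_card.2
                ⟨i, hselfC i, j, (hmemC i j).2 (Or.inr heqM), fun h => hij h⟩
            have hfilter : 𝓒.filter (fun L => i ∈ L ∧ j ∈ L) = {C i} := by
              apply Finset.Subset.antisymm
              · intro X hX
                obtain ⟨hX𝓒, hiX, hjX⟩ := Finset.mem_filter.1 hX
                obtain ⟨l, rfl, _⟩ := hmem𝓒 X hX𝓒
                exact Finset.mem_singleton.2 (hCmem_eq l i hiX).symm
              · intro X hX
                rw [Finset.mem_singleton.1 hX]
                exact Finset.mem_filter.2 ⟨hCi𝓒, hselfC i, (hmemC i j).2 (Or.inr heqM)⟩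
            rw [hfilter, Finset.sum_singleton]
            have ha'M : a' i j = M' := ha'eqM i j hij heqM
            rw [ha'M] at hrepr'ij
            rw [heqM]
            linarith [hrepr'ij]
        · -- cluster property of the combined family
          intro L hL x hx y hy l hl hxy
          rcases Finset.mem_union.1 hL with h | h
          · have h3 : a' x y > a' x l := hclus' L h x hx y hy l hl hxy
            have h4 : a' x l < M' := lt_of_lt_of_le h3 (ha'le x y)
            have h5 : a x l = a' x l := by
              rcases le_total (a x l) M' with hle | hge
              · exact (min_eq_left hle).symm
              · exfalso
                have : a' x l = M' := min_eq_right hge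
                rw [this] at h4
                exact lt_irrefl _ h4
            calc a x l = a' x l := h5
              _ < a' x y := h3
              _ ≤ a x y := ha'lea x y
          · exact hCclus L h x hx y hy l hl hxy

/-- any real symmetric anti-ultrametric `a` with global minimum `α*`
is represented by a positively weighted laminar family of proper subsets of `[n]`:
`a i j = ∑ { c L : L ∈ 𝓛, i,j ∈ L } + α*` for all distinct `i,j`. -/
theorem stmt6 (n : ℕ) (hn : 2 ≤ n) (a : Fin n → Fin n → ℝ)
    (hsym : ∀ i j, a i j = a j i)
    (hultra : ∀ i j k : Fin n, i ≠ j → j ≠ k → i ≠ k →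
      a i j ≥ min (a i k) (a j k))
    (αstar : ℝ) (hα : IsLeast {v : ℝ | ∃ i j : Fin n, i ≠ j ∧ v = a i j} αstar) :
    ∃ (𝓛 : Finset (Finset (Fin n))) (c : Finset (Fin n) → ℝ),
      (∀ X ∈ 𝓛, ∀ Y ∈ 𝓛, X ⊆ Y ∨ Y ⊆ X ∨ X ∩ Y = ∅) ∧
      (∀ L ∈ 𝓛, L ≠ Finset.univ) ∧
      (∀ L ∈ 𝓛, 0 < c L) ∧
      (∀ i j : Fin n, i ≠ j →
        a i j = (∑ L ∈ 𝓛.filter (fun L => i ∈ L ∧ j ∈ L), c L) + αstar) := by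
  obtain ⟨𝓛, c, h1, h2, h3, h4, _⟩ :=
    stmt6_key n hn
      ((((Finset.univ ×ˢ Finset.univ).filter (fun p : Fin n × Fin n => p.1 ≠ p.2)).image
        (fun p => a p.1 p.2)).card) a le_rfl hsym hultra αstar hα
  exact ⟨𝓛, c, h1, h2, h3, h4⟩
end

section
/- Let A = {A_1,…,A_r} be a partition of [n] with all blocks of size at least 2, and let X ⊆ [n] be a set that cuts at least two blocks (i.e., at least two blocks A_p satisfy ∅ ≠ X ∩ A_p ≠ A_p). Then the function x ↦ (∑_{i∈X} x_i)^2 is not affine on U_A: there is no u ∈ ℝ^n and γ ∈ ℝ with (∑_{i∈X} x_i)^2 = ∑_i u_i x_i + γ for all x ∈ U_A. -/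
/-- if every block has size ≥ 2 and `X` cuts at least two blocks,
then `(∑_{i∈X} x_i)²` is not affine on `U_A`. -/
theorem stmt9 (n r : ℕ) (A : Fin r → Finset (Fin n))
    (hdisj : ∀ p q : Fin r, p ≠ q → Disjoint (A p) (A q))
    (hcover : ∀ i : Fin n, ∃ p : Fin r, i ∈ A p)
    (hsize : ∀ p : Fin r, 2 ≤ (A p).card)
    (X : Finset (Fin n))
    (hcut : ∃ p q : Fin r, p ≠ q ∧
      (X ∩ A p).Nonempty ∧ X ∩ A p ≠ A p ∧
      (X ∩ A q).Nonempty ∧ X ∩ A q ≠ A q) :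
    ¬ ∃ (u : Fin n → ℝ) (γ : ℝ),
        ∀ x : Fin n → ℝ, (∀ i, x i = 0 ∨ x i = 1) →
          (∀ q : Fin r, ∑ i ∈ A q, x i = 1) →
          (∑ i ∈ X, x i) ^ 2 = ∑ i, u i * x i + γ := by
  rintro ⟨u, γ, hu⟩
  obtain ⟨p, q, hpq, ⟨a, ha⟩, hXp, ⟨b, hb⟩, hXq⟩ := hcut
  obtain ⟨a', ha'A, ha'n⟩ :=
    Finset.exists_of_ssubset (lt_of_le_of_ne Finset.inter_subset_right hXp)
  obtain ⟨b', hb'A, hb'n⟩ :=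
    Finset.exists_of_ssubset (lt_of_le_of_ne Finset.inter_subset_right hXq)
  have haA : a ∈ A p := (Finset.mem_inter.mp ha).2
  have haX : a ∈ X := (Finset.mem_inter.mp ha).1
  have hbA : b ∈ A q := (Finset.mem_inter.mp hb).2
  have hbX : b ∈ X := (Finset.mem_inter.mp hb).1
  have ha'X : a' ∉ X := fun h => ha'n (Finset.mem_inter.mpr ⟨h, ha'A⟩)
  have hb'X : b' ∉ X := fun h => hb'n (Finset.mem_inter.mpr ⟨h, hb'A⟩)
  have hgne : ∀ s : Fin r, (A s).Nonempty := fun s =>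
    Finset.card_pos.mp (by have := hsize s; omega)
  choose g hgmem using hgne
  have hD : ∀ s t : Fin r, s ≠ t → ∀ i : Fin n, i ∈ A s → i ∈ A t → False := by
    intro s t hst i hs ht
    exact Finset.disjoint_left.mp (hdisj s t hst) hs ht
  have hginj : Function.Injective g := by
    intro s t hst
    by_contra hne
    exact hD s t hne (g s) (hgmem s) (hst ▸ hgmem t)
  set E : Finset (Fin r) := (Finset.univ.erase p).erase q with hE
  set B : Finset (Fin n) := E.image g with hB
  -- membership of B lies in blocks other than p, q
  have hBnot : ∀ s : Fin r, s = p ∨ s = q → ∀ i ∈ B, i ∉ A s := by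
    rintro s hs i hi
    obtain ⟨t, ht, rfl⟩ := Finset.mem_image.mp hi
    have htq : t ≠ q := (Finset.mem_erase.mp ht).1
    have htp : t ≠ p := (Finset.mem_erase.mp (Finset.mem_erase.mp ht).2).1
    intro hmem
    have hts : t ≠ s := by rcases hs with rfl | rfl <;> [exact htp; exact htq]
    exact hD t s hts (g t) (hgmem t) hmem
  have swap : ∀ (S T : Finset (Fin n)),
      ∑ i ∈ S, (if i ∈ T then (1:ℝ) else 0) = ∑ i ∈ T, (if i ∈ S then (1:ℝ) else 0) := by
    intro S T
    rw [Finset.sum_ite_mem, Finset.sum_ite_mem, Finset.inter_comm]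
  -- the main evaluation for each choice c ∈ A p, d ∈ A q
  have key : ∀ c ∈ A p, ∀ d ∈ A q,
      (((if c ∈ X then (1:ℝ) else 0) + (if d ∈ X then 1 else 0) + ((X ∩ B).card : ℝ)))^2
        = u c + u d + ∑ i ∈ B, u i + γ := by
    intro c hc d hd
    have hcd : c ≠ d := by
      intro h; exact hD p q hpq c hc (h ▸ hd)
    have hcB : c ∉ B := fun h => hBnot p (Or.inl rfl) c h hc
    have hdB : d ∉ B := fun h => hBnot q (Or.inr rfl) d h hd
    set T : Finset (Fin n) := insert c (insert d B) with hT
    have hcT : c ∉ insert d B := by simp [hcd, hcB]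
    have hx := hu (fun i => if i ∈ T then (1:ℝ) else 0)
      (fun i => by by_cases h : i ∈ T <;> simp [h])
      (by
        intro s
        rw [swap (A s) T, hT, Finset.sum_insert hcT, Finset.sum_insert hdB]
        by_cases hsp : s = p
        · subst hsp
          have hdns : d ∉ A s := by
            intro h; exact hD q s (Ne.symm hpq) d hd h
          have : ∑ i ∈ B, (if i ∈ A s then (1:ℝ) else 0) = 0 :=
            Finset.sum_eq_zero fun i hi => by simp [hBnot s (Or.inl rfl) i hi]
          simp [hc, hdns, this]
        by_cases hsq : s = q
        · subst hsq
          have hcns : c ∉ A s := by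
            intro h; exact hD p s hpq c hc h
          have : ∑ i ∈ B, (if i ∈ A s then (1:ℝ) else 0) = 0 :=
            Finset.sum_eq_zero fun i hi => by simp [hBnot s (Or.inr rfl) i hi]
          simp [hd, hcns, this]
        · have hcns : c ∉ A s := by
            intro h
            exact hD p s (fun hh => hsp hh.symm) c hc h
          have hdns : d ∉ A s := by
            intro h
            exact hD q s (fun hh => hsq hh.symm) d hd h
          have hsE : s ∈ E := by simp [hE, hsp, hsq]
          have : ∑ i ∈ B, (if i ∈ A s then (1:ℝ) else 0) = 1 := by
            rw [hB, Finset.sum_image (fun x _ y _ h => hginj h)]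
            rw [Finset.sum_congr rfl (fun t ht => ?_), Finset.sum_ite_eq' E s (fun _ => (1:ℝ))]
            · simp [hsE]
            · congr 1
              simp only [eq_iff_iff]
              constructor
              · intro h
                by_contra hne
                exact hD t s hne (g t) (hgmem t) h
              · rintro rfl; exact hgmem t
          simp [hcns, hdns, this])
    -- rewrite both sides of hx
    have hXsum : ∑ i ∈ X, (if i ∈ T then (1:ℝ) else 0)
        = (if c ∈ X then (1:ℝ) else 0) + (if d ∈ X then 1 else 0) + ((X ∩ B).card : ℝ) := by
      rw [swap X T, hT, Finset.sum_insert hcT, Finset.sum_insert hdB,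
        swap B X, Finset.sum_ite_mem, Finset.sum_const, Finset.inter_comm]
      simp [add_assoc]
    have hUsum : ∑ i, u i * (if i ∈ T then (1:ℝ) else 0) = u c + u d + ∑ i ∈ B, u i := by
      have : ∀ i : Fin n, u i * (if i ∈ T then (1:ℝ) else 0) = if i ∈ T then u i else 0 := by
        intro i; by_cases h : i ∈ T <;> simp [h]
      rw [Finset.sum_congr rfl fun i _ => this i, Finset.sum_ite_mem,
        Finset.univ_inter, hT, Finset.sum_insert hcT, Finset.sum_insert hdB, add_assoc]
    rw [hXsum, hUsum] at hx
    exact hx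
  have e1 := key a haA b hbA
  have e2 := key a haA b' hb'A
  have e3 := key a' ha'A b hbA
  have e4 := key a' ha'A b' hb'A
  simp only [if_pos haX, if_pos hbX, if_neg ha'X, if_neg hb'X] at e1 e2 e3 e4
  nlinarith [e1, e2, e3, e4]
end

section
/- Let A = {A_1,…,A_r} be a partition of [n] and let X, Y ⊆ [n] each cut at least two blocks of A. If {⟨X⟩∩X, ⟨X⟩∖X} = {⟨Y⟩∩Y, ⟨Y⟩∖Y} (same cutting support and same bipartition of it), then the function x ↦ (∑_{i∈X} x_i)^2 − (∑_{i∈Y} x_i)^2 is affine on U_A := {x ∈ {0,1}^n : ∑_{i∈A_q} x_i = 1 for all q}. -/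
lemma aux_card {n r : ℕ} (A : Fin r → Finset (Fin n))
    (hdisj : ∀ p q : Fin r, p ≠ q → Disjoint (A p) (A q))
    (s : Finset (Fin r)) (x : Fin n → ℝ)
    (hsum : ∀ q : Fin r, ∑ i ∈ A q, x i = 1) :
    ∑ i ∈ s.biUnion A, x i = s.card := by
  rw [Finset.sum_biUnion]
  · simp [hsum]
  · intro p hp q hq hpq
    exact hdisj p q hpq

lemma aux_sum {n r : ℕ} (A : Fin r → Finset (Fin n))
    (hdisj : ∀ p q : Fin r, p ≠ q → Disjoint (A p) (A q))
    (hcover : ∀ i : Fin n, ∃ p : Fin r, i ∈ A p)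
    (X : Finset (Fin n)) (x : Fin n → ℝ)
    (hsum : ∀ q : Fin r, ∑ i ∈ A q, x i = 1) :
    ∑ i ∈ X, x i =
      ∑ i ∈ ((Finset.univ.filter
        (fun p : Fin r => (X ∩ A p).Nonempty ∧ X ∩ A p ≠ A p)).biUnion A) ∩ X, x i
      + (Finset.univ.filter (fun p : Fin r => X ∩ A p = A p)).card := by
  have hX : X = Finset.univ.biUnion (fun p => X ∩ A p) := by
    ext i
    simp only [Finset.mem_biUnion, Finset.mem_univ, true_and, Finset.mem_inter]
    constructor
    · intro hi
      obtain ⟨p, hp⟩ := hcover i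
      exact ⟨p, hi, hp⟩
    · rintro ⟨p, hi, -⟩; exact hi
  have hpd : ∀ p ∈ (Finset.univ : Finset (Fin r)), ∀ q ∈ Finset.univ, p ≠ q →
      Disjoint (X ∩ A p) (X ∩ A q) := by
    intro p _ q _ hpq
    exact (hdisj p q hpq).mono (Finset.inter_subset_right) (Finset.inter_subset_right)
  conv_lhs => rw [hX]
  rw [Finset.sum_biUnion hpd]
  rw [← Finset.sum_filter_add_sum_filter_not Finset.univ
    (fun p : Fin r => (X ∩ A p).Nonempty ∧ X ∩ A p ≠ A p)]
  congr 1
  · have hset : ((Finset.univ.filter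
        (fun p : Fin r => (X ∩ A p).Nonempty ∧ X ∩ A p ≠ A p)).biUnion A) ∩ X =
        (Finset.univ.filter
        (fun p : Fin r => (X ∩ A p).Nonempty ∧ X ∩ A p ≠ A p)).biUnion
          (fun p => X ∩ A p) := by
      ext i
      simp only [Finset.mem_inter, Finset.mem_biUnion]
      tauto
    rw [hset, Finset.sum_biUnion]
    intro p hp q hq hpq
    exact hpd p (Finset.mem_univ p) q (Finset.mem_univ q) hpq
  · have h1 : ∀ p ∈ Finset.univ.filter
        (fun p : Fin r => ¬((X ∩ A p).Nonempty ∧ X ∩ A p ≠ A p)),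
        ∑ i ∈ X ∩ A p, x i = if X ∩ A p = A p then (1 : ℝ) else 0 := by
      intro p hp
      rw [Finset.mem_filter] at hp
      push_neg at hp
      by_cases hfull : X ∩ A p = A p
      · rw [if_pos hfull, hfull]; exact hsum p
      · rw [if_neg hfull]
        have : X ∩ A p = ∅ := by
          by_contra h
          exact hfull (hp.2 (Finset.nonempty_iff_ne_empty.2 h))
        rw [this]; simp
    rw [Finset.sum_congr rfl h1]
    simp only [Finset.sum_ite, Finset.sum_const, nsmul_eq_mul, mul_one,
      Finset.sum_const_zero, add_zero, Finset.filter_filter]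
    have : (Finset.univ.filter (fun p : Fin r =>
        ¬((X ∩ A p).Nonempty ∧ X ∩ A p ≠ A p) ∧ X ∩ A p = A p)) =
        Finset.univ.filter (fun p : Fin r => X ∩ A p = A p) := by
      apply Finset.filter_congr
      intro p _
      constructor
      · exact fun h => h.2
      · intro h; exact ⟨by push_neg; intro _; exact h, h⟩
    rw [this]
    ring

/-- if two `A`-cuts `X, Y` have the same cutting support and induce
the same bipartition of it, then `(∑_{i∈X} x_i)² − (∑_{i∈Y} x_i)²` is affine on
`U_A`. -/
theorem stmt17 (n r : ℕ) (A : Fin r → Finset (Fin n))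
    (hdisj : ∀ p q : Fin r, p ≠ q → Disjoint (A p) (A q))
    (hcover : ∀ i : Fin n, ∃ p : Fin r, i ∈ A p)
    (hne : ∀ p : Fin r, (A p).Nonempty)
    (X Y : Finset (Fin n))
    (hcutX : ∃ p q : Fin r, p ≠ q ∧
      (X ∩ A p).Nonempty ∧ X ∩ A p ≠ A p ∧ (X ∩ A q).Nonempty ∧ X ∩ A q ≠ A q)
    (hcutY : ∃ p q : Fin r, p ≠ q ∧
      (Y ∩ A p).Nonempty ∧ Y ∩ A p ≠ A p ∧ (Y ∩ A q).Nonempty ∧ Y ∩ A q ≠ A q)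
    (aveX aveY : Finset (Fin n))
    (haveX : aveX = (Finset.univ.filter
      (fun p : Fin r => (X ∩ A p).Nonempty ∧ X ∩ A p ≠ A p)).biUnion A)
    (haveY : aveY = (Finset.univ.filter
      (fun p : Fin r => (Y ∩ A p).Nonempty ∧ Y ∩ A p ≠ A p)).biUnion A)
    (hsame : (aveX ∩ X = aveY ∩ Y ∧ aveX \ X = aveY \ Y) ∨
             (aveX ∩ X = aveY \ Y ∧ aveX \ X = aveY ∩ Y)) :
    ∃ (u : Fin n → ℝ) (γ : ℝ),
      ∀ x : Fin n → ℝ, (∀ i, x i = 0 ∨ x i = 1) →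
        (∀ q : Fin r, ∑ i ∈ A q, x i = 1) →
        (∑ i ∈ X, x i) ^ 2 - (∑ i ∈ Y, x i) ^ 2 = ∑ i, u i * x i + γ := by
  set cX : ℝ := ((Finset.univ.filter (fun p : Fin r => X ∩ A p = A p)).card : ℝ)
  set cY : ℝ := ((Finset.univ.filter (fun p : Fin r => Y ∩ A p = A p)).card : ℝ)
  set mY : ℝ := ((Finset.univ.filter
      (fun p : Fin r => (Y ∩ A p).Nonempty ∧ Y ∩ A p ≠ A p)).card : ℝ)
  rcases hsame with ⟨h1, _⟩ | ⟨h1, _⟩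
  · -- case 1: S_X - S_Y = cX - cY constant
    refine ⟨fun i => if i ∈ Y then 2 * (cX - cY) else 0, (cX - cY) ^ 2, ?_⟩
    intro x _ hsum
    have hXs := aux_sum A hdisj hcover X x hsum
    have hYs := aux_sum A hdisj hcover Y x hsum
    rw [← haveX] at hXs
    rw [← haveY] at hYs
    rw [h1] at hXs
    have hdiff : ∑ i ∈ X, x i = ∑ i ∈ Y, x i + (cX - cY) := by
      rw [hXs, hYs]; ring
    have hu : ∑ i, (if i ∈ Y then 2 * (cX - cY) else 0) * x i
        = 2 * (cX - cY) * ∑ i ∈ Y, x i := by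
      rw [Finset.mul_sum]
      have hY : ∀ c : ℝ, ∑ i ∈ Y, c * x i
          = ∑ i ∈ Finset.univ, if i ∈ Y then c * x i else 0 := by
        intro c
        rw [← Finset.sum_filter]
        congr 1
        simp
      rw [hY]
      apply Finset.sum_congr rfl
      intro i _
      by_cases h : i ∈ Y <;> simp [h]
    rw [hu, hdiff]; ring
  · -- case 2: S_X + S_Y = cX + cY + mY constant
    refine ⟨fun i => if i ∈ Y then -(2 * (cX + cY + mY)) else 0,
      (cX + cY + mY) ^ 2, ?_⟩
    intro x _ hsum
    have hXs := aux_sum A hdisj hcover X x hsum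
    have hYs := aux_sum A hdisj hcover Y x hsum
    rw [← haveX] at hXs
    rw [← haveY] at hYs
    have haY : ∑ i ∈ aveY, x i = mY := by
      rw [haveY]
      exact aux_card A hdisj _ x hsum
    have hsplit : ∑ i ∈ aveY ∩ Y, x i + ∑ i ∈ aveY \ Y, x i = mY := by
      rw [Finset.sum_inter_add_sum_sdiff]; exact haY
    rw [h1] at hXs
    have hdiff : ∑ i ∈ X, x i = (cX + cY + mY) - ∑ i ∈ Y, x i := by
      rw [hXs, hYs]
      have := hsplit
      linarith
    have hu : ∑ i, (if i ∈ Y then -(2 * (cX + cY + mY)) else 0) * x i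
        = -(2 * (cX + cY + mY)) * ∑ i ∈ Y, x i := by
      rw [Finset.mul_sum]
      have hY : ∀ c : ℝ, ∑ i ∈ Y, c * x i
          = ∑ i ∈ Finset.univ, if i ∈ Y then c * x i else 0 := by
        intro c
        rw [← Finset.sum_filter]
        congr 1
        simp
      rw [hY]
      apply Finset.sum_congr rfl
      intro i _
      by_cases h : i ∈ Y <;> simp [h]
    rw [hu, hdiff]; ring
end
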